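/- arXiv:1003.0038 — 3 statements merged into one kernel-verified Lean document; each statement's English description precedes it below -/
import Mathlib

section
/- Let vec : L(X, Y) → Y ⊗ X be the isomorphism defined on standard basis elements by vec(f_j e_i*) = f_j ⊗ e_i. Then for any operators A : X → Y and B : Y → X, the partial trace over X of vec(A)·vec(B)* equals A B*, and the partial trace over Y of vec(A)·vec(B)* equals (B* A)ᵀ. -/
open Matrix

/-- The operator-vector isomorphism `vec(f_j e_i*) = f_j ⊗ e_i`. -/
def vec {dx dy : ℕ} (A : Matrix (Fin dy) (Fin dx) ℂ) : Fin dy × Fin dx → ℂ :=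
  fun p => A p.1 p.2

/-- The rank-one operator `vec(A) · vec(B)*` on `Y ⊗ X`. -/
def vecOuter {dx dy : ℕ} (A B : Matrix (Fin dy) (Fin dx) ℂ) :
    Matrix (Fin dy × Fin dx) (Fin dy × Fin dx) ℂ :=
  fun p q => vec A p * star (vec B q)

/-- Partial trace over the first (`Y`) tensor factor. -/
noncomputable def ptraceFst {α β : Type*} [Fintype α] (M : Matrix (α × β) (α × β) ℂ) :
    Matrix β β ℂ := fun i j => ∑ a, M (a, i) (a, j)

/-- Partial trace over the second (`X`) tensor factor. -/
noncomputable def ptraceSnd {α β : Type*} [Fintype β] (M : Matrix (α × β) (α × β) ℂ) :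
    Matrix α α ℂ := fun a b => ∑ i, M (a, i) (b, i)

/-- `Tr_X(vec(A)vec(B)*) = A B*` and `Tr_Y(vec(A)vec(B)*) = (B* A)ᵀ`. -/
theorem ptrace_vecOuter {dx dy : ℕ} (A B : Matrix (Fin dy) (Fin dx) ℂ) :
    ptraceSnd (vecOuter A B) = A * Bᴴ ∧
    ptraceFst (vecOuter A B) = (Bᴴ * A)ᵀ := by
  constructor <;> ext i j <;>
    simp [ptraceSnd, ptraceFst, vecOuter, _root_.vec, Matrix.mul_apply, Matrix.conjTranspose_apply,
      Matrix.transpose_apply, mul_comm]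
end

section
/- Let S₁, …, S_m be subspaces of Hermitian operators each containing the identity. If P = P₁ ⊗ ⋯ ⊗ P_m is a product operator with each P_i ∈ S_i positive semidefinite, then ‖P‖·I − P is (S₁;…;S_m)-separable, i.e., it is a sum of product operators Q₁ ⊗ ⋯ ⊗ Q_m with each Q_i ∈ S_i positive semidefinite. -/
open Matrix
open scoped ComplexOrder

variable {m : ℕ} {d : Fin m → ℕ}

/-- The elementary tensor product of matrices `P i`, as a matrix on the product space. -/
def prodMat (P : ∀ i, Matrix (Fin (d i)) (Fin (d i)) ℂ) :
    Matrix (∀ i, Fin (d i)) (∀ i, Fin (d i)) ℂ :=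
  Matrix.of fun p q => ∏ i, P i (p i) (q i)

/-- The subspace `S₁ ⊗ ⋯ ⊗ S_m`, i.e. the real span of elementary tensor products of
elements of the subspaces `S i`. -/
noncomputable def tensorSpan (S : ∀ i, Submodule ℝ (Matrix (Fin (d i)) (Fin (d i)) ℂ)) :
    Submodule ℝ (Matrix (∀ i, Fin (d i)) (∀ i, Fin (d i)) ℂ) :=
  Submodule.span ℝ {X | ∃ P : ∀ i, Matrix (Fin (d i)) (Fin (d i)) ℂ,
    (∀ i, P i ∈ S i) ∧ X = prodMat P}

/-- `(S₁;…;S_m)`-separability: a finite sum of elementary tensor products of positive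
semidefinite elements of the subspaces `S i`. -/
def IsSep (S : ∀ i, Submodule ℝ (Matrix (Fin (d i)) (Fin (d i)) ℂ))
    (X : Matrix (∀ i, Fin (d i)) (∀ i, Fin (d i)) ℂ) : Prop :=
  ∃ (k : ℕ) (P : Fin k → ∀ i, Matrix (Fin (d i)) (Fin (d i)) ℂ),
    (∀ j i, P j i ∈ S i ∧ (P j i).PosSemidef) ∧ X = ∑ j, prodMat (P j)

/-- The operator (spectral) norm of a complex matrix. -/
noncomputable def opNorm {n : Type*} [Fintype n] [DecidableEq n] (A : Matrix n n ℂ) : ℝ :=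
  ‖Matrix.toEuclideanCLM (𝕜 := ℂ) A‖

/-- The Frobenius norm of a complex matrix. -/
noncomputable def frobNorm {n : Type*} [Fintype n] (A : Matrix n n ℂ) : ℝ :=
  Real.sqrt (∑ p, ∑ q, ‖A p q‖ ^ 2)

/-! ### Auxiliary lemmas -/

lemma aux_telescope {R : Type*} [CommRing R] : ∀ {m : ℕ} (a b : Fin m → R),
    (∏ i, a i) - ∏ i, b i =
    ∑ k, ∏ i, (if i < k then a i else if i = k then a i - b i else b i) := by
  intro m
  induction m with
  | zero => simp
  | succ n ih =>
    intro a b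
    rw [Fin.prod_univ_castSucc a, Fin.prod_univ_castSucc b, Fin.sum_univ_castSucc]
    have hlast : ∏ i, (if i < Fin.last n then a i else if i = Fin.last n then a i - b i else b i)
        = (∏ i : Fin n, a i.castSucc) * (a (Fin.last n) - b (Fin.last n)) := by
      rw [Fin.prod_univ_castSucc]
      congr 1
      · exact Finset.prod_congr rfl fun i _ => by
          simp [Fin.castSucc_lt_last]
      · simp
    have hk : ∀ k : Fin n, ∏ i, (if i < (k.castSucc : Fin (n+1)) then a i
          else if i = k.castSucc then a i - b i else b i)
        = (∏ i : Fin n, (if i < k then a i.castSucc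
            else if i = k then a i.castSucc - b i.castSucc else b i.castSucc)) * b (Fin.last n) := by
      intro k
      rw [Fin.prod_univ_castSucc]
      congr 1
      · exact Finset.prod_congr rfl fun i _ => by
          simp [Fin.castSucc_lt_castSucc_iff, Fin.castSucc_inj]
      · have h1 : ¬ (Fin.last n < k.castSucc) := by
          exact not_lt_of_gt (Fin.castSucc_lt_last k)
        have h2 : (Fin.last n) ≠ k.castSucc := (Fin.castSucc_lt_last k).ne'
        simp [h1, h2]
    rw [hlast]
    simp_rw [hk]
    rw [← Finset.sum_mul, ← ih (fun i => a i.castSucc) (fun i => b i.castSucc)]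
    ring

lemma prodMat_mul (A B : ∀ i, Matrix (Fin (d i)) (Fin (d i)) ℂ) :
    prodMat (fun i => A i * B i) = prodMat A * prodMat B := by
  ext p r
  simp only [prodMat, Matrix.of_apply, Matrix.mul_apply]
  rw [Finset.prod_univ_sum]
  rw [Fintype.piFinset_univ]
  exact Finset.sum_congr rfl fun q _ => by rw [Finset.prod_mul_distrib]

lemma prodMat_conjTranspose (A : ∀ i, Matrix (Fin (d i)) (Fin (d i)) ℂ) :
    (prodMat A)ᴴ = prodMat (fun i => (A i)ᴴ) := by
  ext p q
  simp only [prodMat, Matrix.of_apply, Matrix.conjTranspose_apply]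
  exact star_prod _ _

lemma prodMat_posSemidef {A : ∀ i, Matrix (Fin (d i)) (Fin (d i)) ℂ}
    (hA : ∀ i, (A i).PosSemidef) : (prodMat A).PosSemidef := by
  have h : ∀ i, ∃ B, A i = Bᴴ * B := fun i => by
    open scoped MatrixOrder in
    obtain ⟨B, hB⟩ := CStarAlgebra.nonneg_iff_eq_star_mul_self.mp (hA i).nonneg
    exact ⟨B, hB⟩
  choose B hB using h
  suffices hh : prodMat A = (prodMat B)ᴴ * prodMat B by
    rw [hh]; exact posSemidef_conjTranspose_mul_self _
  rw [prodMat_conjTranspose, ← prodMat_mul]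
  have : A = fun i => (B i)ᴴ * B i := funext hB
  rw [this]

lemma prodMat_mulVec (A : ∀ i, Matrix (Fin (d i)) (Fin (d i)) ℂ) (x : ∀ i, Fin (d i) → ℂ) :
    prodMat A *ᵥ (fun p => ∏ i, x i (p i)) = fun p => ∏ i, (A i *ᵥ x i) (p i) := by
  funext p
  simp only [Matrix.mulVec, dotProduct, prodMat, Matrix.of_apply]
  rw [Finset.prod_univ_sum, Fintype.piFinset_univ]
  exact Finset.sum_congr rfl fun q _ => by rw [Finset.prod_mul_distrib]

lemma one_apply_prod (p q : ∀ i, Fin (d i)) :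
    (if p = q then (1:ℂ) else 0) = ∏ i, (if p i = q i then (1:ℂ) else 0) := by
  rw [Finset.prod_boole]
  simp [funext_iff]

lemma sqrt_prod {ι : Type*} (s : Finset ι) (f : ι → ℝ) (h : ∀ i ∈ s, 0 ≤ f i) :
    Real.sqrt (∏ i ∈ s, f i) = ∏ i ∈ s, Real.sqrt (f i) := by
  induction s using Finset.cons_induction with
  | empty => simp
  | cons a s ha ih =>
    rw [Finset.prod_cons, Finset.prod_cons, Real.sqrt_mul (h a (Finset.mem_cons_self a s)),
      ih fun i hi => h i (Finset.mem_cons_of_mem hi)]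

lemma psd_smul_one {n : Type*} [Fintype n] [DecidableEq n] {t : ℝ} (ht : 0 ≤ t) :
    (t • (1 : Matrix n n ℂ)).PosSemidef := by
  have : t • (1 : Matrix n n ℂ) = diagonal (fun _ => (t : ℂ)) := by
    rw [← Matrix.smul_one_eq_diagonal]
    ext i j
    simp [Complex.real_smul]
  rw [this]
  exact Matrix.PosSemidef.diagonal fun i => Complex.zero_le_real.mpr ht

lemma smul_one_real_eq {n : Type*} [Fintype n] [DecidableEq n] (t : ℝ) :
    t • (1 : Matrix n n ℂ) = (t : ℂ) • (1 : Matrix n n ℂ) := by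
  ext i j; simp [Complex.real_smul]

lemma opNorm_def {n : Type*} [Fintype n] [DecidableEq n] (A : Matrix n n ℂ) :
    opNorm A = ‖Matrix.toEuclideanCLM (𝕜 := ℂ) A‖ := rfl

lemma opNorm_nonneg {n : Type*} [Fintype n] [DecidableEq n] (A : Matrix n n ℂ) :
    0 ≤ opNorm A := norm_nonneg _

lemma isSelfAdjoint_toEuclideanCLM {n : Type*} [Fintype n] [DecidableEq n]
    {A : Matrix n n ℂ} (hA : A.IsHermitian) :
    _root_.IsSelfAdjoint (Matrix.toEuclideanCLM (𝕜 := ℂ) A) := by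
  have h1 : star A = A := by rw [Matrix.star_eq_conjTranspose]; exact hA
  show star (Matrix.toEuclideanCLM (𝕜 := ℂ) A) = _
  rw [← map_star, h1]

lemma posSemidef_opNorm_smul_one_sub {n : Type*} [Fintype n] [DecidableEq n]
    {A : Matrix n n ℂ} (hA : A.PosSemidef) :
    (opNorm A • (1 : Matrix n n ℂ) - A).PosSemidef := by
  set c := opNorm A with hc
  rw [posSemidef_iff_dotProduct_mulVec]
  constructor
  · rw [Matrix.IsHermitian, conjTranspose_sub, smul_one_real_eq, conjTranspose_smul,
      conjTranspose_one, hA.1]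
    rw [Complex.star_def, Complex.conj_ofReal, ← smul_one_real_eq]
  · intro x
    set ex := (WithLp.equiv 2 (n → ℂ)).symm x with hex
    set f := Matrix.toEuclideanCLM (𝕜 := ℂ) A with hf
    have hfx : f ex = (WithLp.equiv 2 (n → ℂ)).symm (A *ᵥ x) := by
      rw [hex, hf, WithLp.equiv_symm_apply, Matrix.toEuclideanCLM_toLp]
    have hw : dotProduct (star x) (A *ᵥ x) = inner ℂ ex (f ex) := by
      rw [hfx, hex, WithLp.equiv_symm_apply, EuclideanSpace.inner_toLp_toLp, dotProduct_comm]
    have hs : dotProduct (star x) x = ((‖ex‖ ^ 2 : ℝ) : ℂ) := by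
      rw [show dotProduct (star x) x = inner ℂ ex ex by
          rw [hex, WithLp.equiv_symm_apply, EuclideanSpace.inner_toLp_toLp, dotProduct_comm],
        inner_self_eq_norm_sq_to_K]
      push_cast
      rfl
    have hmv : (c • (1 : Matrix n n ℂ) - A) *ᵥ x = (c : ℂ) • x - A *ᵥ x := by
      rw [smul_one_real_eq, sub_mulVec, smul_mulVec, one_mulVec]
    rw [hmv, dotProduct_sub, dotProduct_smul, hw, hs]
    set w : ℂ := inner ℂ ex (f ex) with hwdef
    have hsa := isSelfAdjoint_toEuclideanCLM hA.1
    have hwim : w.im = 0 := by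
      have : (starRingEnd ℂ) w = w := by
        rw [hwdef, inner_conj_symm]
        exact hsa.isSymmetric ex ex
      exact Complex.conj_eq_iff_im.mp this
    have hwre : w.re ≤ c * ‖ex‖ ^ 2 := by
      calc w.re ≤ ‖w‖ := Complex.re_le_norm w
        _ = ‖w‖ := rfl
        _ ≤ ‖ex‖ * ‖f ex‖ := norm_inner_le_norm ex (f ex)
        _ ≤ ‖ex‖ * (‖f‖ * ‖ex‖) := by
            gcongr
            exact f.le_opNorm ex
        _ = c * ‖ex‖ ^ 2 := by rw [hc, opNorm_def, ← hf]; ring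
    have hwr : w = ((w.re : ℝ) : ℂ) := by
      rw [Complex.ext_iff]
      constructor <;> simp [hwim]
    rw [smul_eq_mul, hwr]
    have h0 : (0:ℝ) ≤ c * ‖ex‖ ^ 2 - w.re := by linarith
    calc (0:ℂ) ≤ ((c * ‖ex‖ ^ 2 - w.re : ℝ) : ℂ) := Complex.zero_le_real.mpr h0
      _ = (c:ℂ) * ((‖ex‖ ^ 2 : ℝ):ℂ) - ((w.re:ℝ):ℂ) := by push_cast; ring

lemma exists_opNorm_attained {E : Type*} [NormedAddCommGroup E] [NormedSpace ℂ E]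
    [FiniteDimensional ℂ E] [Nontrivial E] (f : E →L[ℂ] E) :
    ∃ u : E, ‖u‖ = 1 ∧ ‖f u‖ = ‖f‖ := by
  obtain ⟨u, hu, hmax⟩ := (isCompact_sphere (0 : E) 1).exists_isMaxOn
    (NormedSpace.sphere_nonempty.mpr zero_le_one)
    ((continuous_norm.comp f.continuous).continuousOn)
  have hu1 : ‖u‖ = 1 := mem_sphere_zero_iff_norm.mp hu
  refine ⟨u, hu1, le_antisymm ?_ ?_⟩
  · calc ‖f u‖ ≤ ‖f‖ * ‖u‖ := f.le_opNorm u
      _ = ‖f‖ := by rw [hu1, mul_one]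
  · refine f.opNorm_le_bound (norm_nonneg _) fun y => ?_
    rcases eq_or_ne y 0 with rfl | hy
    · simp
    · have h1 : ‖(‖y‖⁻¹ • y : E)‖ = 1 := norm_smul_inv_norm hy
      have h3 := hmax (mem_sphere_zero_iff_norm.mpr h1)
      have h2 : f (‖y‖⁻¹ • y) = ‖y‖⁻¹ • f y := f.map_smul_of_tower _ _
      simp only [Set.mem_setOf_eq, Function.comp_apply, h2, norm_smul, norm_inv, norm_norm] at h3
      have hy' : 0 < ‖y‖ := norm_pos_iff.mpr hy
      calc ‖f y‖ = ‖y‖ * (‖y‖⁻¹ * ‖f y‖) := by field_simp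
        _ ≤ ‖y‖ * ‖f u‖ := mul_le_mul_of_nonneg_left h3 (norm_nonneg y)
        _ = ‖f u‖ * ‖y‖ := mul_comm _ _

lemma euclid_norm_prod (x : ∀ i, Fin (d i) → ℂ) :
    ‖(WithLp.equiv 2 ((∀ i, Fin (d i)) → ℂ)).symm (fun p => ∏ i, x i (p i))‖
      = ∏ i, ‖(WithLp.equiv 2 (Fin (d i) → ℂ)).symm (x i)‖ := by
  simp only [EuclideanSpace.norm_eq]
  have h1 : ∀ p : ∀ i, Fin (d i),
      ‖((WithLp.equiv 2 ((∀ i, Fin (d i)) → ℂ)).symm (fun p => ∏ i, x i (p i))) p‖ ^ 2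
        = ∏ i, ‖x i (p i)‖ ^ 2 := by
    intro p
    have : ((WithLp.equiv 2 ((∀ i, Fin (d i)) → ℂ)).symm (fun p => ∏ i, x i (p i))) p
        = ∏ i, x i (p i) := rfl
    rw [this, norm_prod, ← Finset.prod_pow]
  simp_rw [h1]
  have h2 : ∀ (i : Fin m) (j : Fin (d i)),
      ‖((WithLp.equiv 2 (Fin (d i) → ℂ)).symm (x i)) j‖ = ‖x i j‖ := fun _ _ => rfl
  simp_rw [h2]
  have h3 : (∏ i, ∑ j, ‖x i j‖ ^ 2) = ∑ p : ∀ i, Fin (d i), ∏ i, ‖x i (p i)‖ ^ 2 := by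
    rw [Finset.prod_univ_sum, Fintype.piFinset_univ]
  rw [← h3, sqrt_prod _ _ fun i _ => Finset.sum_nonneg fun j _ => sq_nonneg _]

lemma prod_opNorm_le_opNorm_prodMat (hd : ∀ i, 0 < d i)
    (P : ∀ i, Matrix (Fin (d i)) (Fin (d i)) ℂ) :
    (∏ i, opNorm (P i)) ≤ opNorm (prodMat P) := by
  haveI : ∀ i, Nonempty (Fin (d i)) := fun i => Fin.pos_iff_nonempty.mp (hd i)
  have h := fun i => exists_opNorm_attained (Matrix.toEuclideanCLM (𝕜 := ℂ) (P i))
  choose u hu1 hu2 using h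
  set x : ∀ i, Fin (d i) → ℂ := fun i => WithLp.equiv 2 _ (u i) with hx
  have hxsymm : ∀ i, (WithLp.equiv 2 (Fin (d i) → ℂ)).symm (x i) = u i := fun i =>
    (WithLp.equiv 2 (Fin (d i) → ℂ)).symm_apply_apply (u i)
  set v : (∀ i, Fin (d i)) → ℂ := fun p => ∏ i, x i (p i) with hv
  set ev := (WithLp.equiv 2 ((∀ i, Fin (d i)) → ℂ)).symm v with hev
  have hevn : ‖ev‖ = 1 := by
    rw [hev, hv, euclid_norm_prod]
    rw [Finset.prod_congr rfl fun i _ => by rw [hxsymm i, hu1 i]]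
    simp
  have happ : (Matrix.toEuclideanCLM (𝕜 := ℂ) (prodMat P)) ev
      = (WithLp.equiv 2 ((∀ i, Fin (d i)) → ℂ)).symm (fun p => ∏ i, (P i *ᵥ x i) (p i)) := by
    rw [hev, WithLp.equiv_symm_apply, Matrix.toEuclideanCLM_toLp, hv, prodMat_mulVec]
  have hfu : ∀ i, (WithLp.equiv 2 (Fin (d i) → ℂ)).symm (P i *ᵥ x i)
      = Matrix.toEuclideanCLM (𝕜 := ℂ) (P i) (u i) := by
    intro i
    rw [← hxsymm i, WithLp.equiv_symm_apply, Matrix.toEuclideanCLM_toLp]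
  have hnorm : ‖(Matrix.toEuclideanCLM (𝕜 := ℂ) (prodMat P)) ev‖ = ∏ i, opNorm (P i) := by
    rw [happ, euclid_norm_prod]
    exact Finset.prod_congr rfl fun i _ => by rw [hfu i, hu2 i, ← opNorm_def]
  calc (∏ i, opNorm (P i)) = ‖(Matrix.toEuclideanCLM (𝕜 := ℂ) (prodMat P)) ev‖ := hnorm.symm
    _ ≤ ‖Matrix.toEuclideanCLM (𝕜 := ℂ) (prodMat P)‖ * ‖ev‖ :=
        (Matrix.toEuclideanCLM (𝕜 := ℂ) (prodMat P)).le_opNorm ev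
    _ = opNorm (prodMat P) := by rw [hevn, mul_one, opNorm_def]

lemma prodMat_smul_ite (t : ℝ) (i₀ : Fin m) :
    prodMat (fun i => (if i = i₀ then t else 1) • (1 : Matrix (Fin (d i)) (Fin (d i)) ℂ))
      = t • (1 : Matrix (∀ i, Fin (d i)) (∀ i, Fin (d i)) ℂ) := by
  ext p q
  simp only [prodMat, Matrix.of_apply, Matrix.smul_apply, Matrix.one_apply]
  calc ∏ x, ((if x = i₀ then t else 1) • (if p x = q x then (1:ℂ) else 0))
      = ∏ x, ((if x = i₀ then (t:ℂ) else 1) * (if p x = q x then (1:ℂ) else 0)) :=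
        Finset.prod_congr rfl fun i _ => by split <;> simp [Complex.real_smul]
    _ = (∏ x, (if x = i₀ then (t:ℂ) else 1)) * ∏ x, (if p x = q x then (1:ℂ) else 0) :=
        Finset.prod_mul_distrib
    _ = (t:ℂ) * ∏ x, (if p x = q x then (1:ℂ) else 0) := by
        rw [Finset.prod_ite_eq' Finset.univ i₀ (fun _ => (t:ℂ))]
        simp
    _ = t • (if p = q then (1:ℂ) else 0) := by
        rw [one_apply_prod p q, Complex.real_smul]

lemma prodMat_telescope (c : Fin m → ℝ) (P : ∀ i, Matrix (Fin (d i)) (Fin (d i)) ℂ) :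
    (∏ i, c i) • (1 : Matrix (∀ i, Fin (d i)) (∀ i, Fin (d i)) ℂ) - prodMat P
      = ∑ k : Fin m, prodMat (fun i =>
          if i < k then c i • 1 else if i = k then c i • 1 - P i else P i) := by
  ext p q
  simp only [Matrix.sub_apply, Matrix.smul_apply, Matrix.one_apply, prodMat, Matrix.of_apply,
    Matrix.sum_apply]
  set a : Fin m → ℂ := fun i => (c i : ℂ) * (if p i = q i then (1:ℂ) else 0) with ha
  set b : Fin m → ℂ := fun i => P i (p i) (q i) with hb
  have hL : (∏ i, c i) • (if p = q then (1:ℂ) else 0) = ∏ i, a i := by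
    rw [Complex.real_smul, one_apply_prod p q]
    push_cast
    rw [← Finset.prod_mul_distrib]
  have hR : ∀ k i : Fin m,
      ((if i < k then c i • (1 : Matrix (Fin (d i)) (Fin (d i)) ℂ)
        else if i = k then c i • 1 - P i else P i)) (p i) (q i)
      = (if i < k then a i else if i = k then a i - b i else b i) := by
    intro k i
    by_cases h1 : i < k
    · simp [h1, ha, Matrix.smul_apply, Matrix.one_apply, Complex.real_smul]
    · by_cases h2 : i = k
      · subst h2
        simp [h1, ha, hb, Matrix.smul_apply, Matrix.one_apply, Matrix.sub_apply,
          Complex.real_smul]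
      · simp [h1, h2, ha, hb]
  have hRR : ∀ k : Fin m,
      (∏ i, ((if i < k then c i • (1 : Matrix (Fin (d i)) (Fin (d i)) ℂ)
        else if i = k then c i • 1 - P i else P i)) (p i) (q i))
      = ∏ i, (if i < k then a i else if i = k then a i - b i else b i) :=
    fun k => Finset.prod_congr rfl fun i _ => hR k i
  simp_rw [hRR]
  rw [hL]
  exact aux_telescope a b

/-- If `P = P₁ ⊗ ⋯ ⊗ P_m` is an elementary tensor product with each `P i ∈ S i`
positive semidefinite, then `‖P‖·I − P` is `(S₁;…;S_m)`-separable. -/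
theorem opNorm_smul_one_sub_prod_isSep {m : ℕ} {d : Fin m → ℕ}
    (S : ∀ i, Submodule ℝ (Matrix (Fin (d i)) (Fin (d i)) ℂ))
    (hherm : ∀ i, ∀ A ∈ S i, A.IsHermitian)
    (hone : ∀ i, (1 : Matrix (Fin (d i)) (Fin (d i)) ℂ) ∈ S i)
    (P : ∀ i, Matrix (Fin (d i)) (Fin (d i)) ℂ)
    (hP : ∀ i, P i ∈ S i ∧ (P i).PosSemidef) :
    IsSep S (opNorm (prodMat P) • (1 : Matrix (∀ i, Fin (d i)) (∀ i, Fin (d i)) ℂ)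
      - prodMat P) := by
  by_cases hd : ∀ i, 0 < d i
  · rcases Nat.eq_zero_or_pos m with hm | hm
    · subst hm
      have h1 : prodMat P = 1 := by
        ext p q
        have hpq : p = q := Subsingleton.elim p q
        simp [prodMat, hpq, Matrix.one_apply]
      rw [h1]
      have h2 : opNorm (1 : Matrix (∀ i : Fin 0, Fin (d i)) (∀ i : Fin 0, Fin (d i)) ℂ) = 1 := by
        rw [opNorm_def, _root_.map_one]
        exact norm_one
      rw [h2, one_smul, sub_self]
      exact ⟨0, Fin.elim0, fun j => j.elim0, by simp⟩
    · set c : Fin m → ℝ := fun i => opNorm (P i) with hcdef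
      set t : ℝ := opNorm (prodMat P) - ∏ i, c i with htdef
      have ht : 0 ≤ t := sub_nonneg.mpr (prod_opNorm_le_opNorm_prodMat hd P)
      let i₀ : Fin m := ⟨0, hm⟩
      refine ⟨m + 1, Fin.cons
        (fun i => (if i = i₀ then t else 1) • (1 : Matrix (Fin (d i)) (Fin (d i)) ℂ))
        (fun k i => if i < k then c i • 1 else if i = k then c i • 1 - P i else P i),
        ?_, ?_⟩
      · intro j i
        refine Fin.cases ?_ ?_ j
        · rw [Fin.cons_zero]
          refine ⟨Submodule.smul_mem _ _ (hone i), psd_smul_one ?_⟩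
          split
          · exact ht
          · exact zero_le_one
        · intro k
          rw [Fin.cons_succ]
          by_cases h1 : i < k
          · simp only [if_pos h1]
            exact ⟨Submodule.smul_mem _ _ (hone i), psd_smul_one (opNorm_nonneg _)⟩
          · by_cases h2 : i = k
            · simp only [if_neg h1, if_pos h2]
              exact ⟨Submodule.sub_mem _ (Submodule.smul_mem _ _ (hone i)) (hP i).1,
                posSemidef_opNorm_smul_one_sub (hP i).2⟩
            · simp only [if_neg h1, if_neg h2]
              exact hP i
      · rw [Fin.sum_univ_succ]
        simp only [Fin.cons_zero, Fin.cons_succ]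
        rw [prodMat_smul_ite t i₀, ← prodMat_telescope c P]
        have hsplit : opNorm (prodMat P) = t + ∏ i, c i := by
          rw [htdef]; ring
        rw [hsplit, add_smul, add_sub_assoc]
  · push_neg at hd
    obtain ⟨i0, hi0⟩ := hd
    have h0 : d i0 = 0 := Nat.le_zero.mp hi0
    haveI : IsEmpty (∀ i, Fin (d i)) := ⟨fun p => by
      have := p i0
      rw [h0] at this
      exact this.elim0⟩
    exact ⟨0, Fin.elim0, fun j => j.elim0, by
      ext p q
      exact isEmptyElim p⟩
end

section
/- Let Ψ : L(X ⊗ E) → L(A), Z ∈ L(E), and let φ : L(A ⊗ X) → ℂ be a linear functional. Define Λ : L(X) → L(A) by Λ(X) = Ψ(X ⊗ Z). Then φ(J(Λ)) = ⟨conj(Z), (φ ⊗ id_{L(E)})(J(Ψ))⟩, where conj(Z) denotes the entrywise complex conjugate of Z in the standard basis and ⟨A,B⟩ = tr(A*B). -/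
open Matrix
open scoped Kronecker

/-- The Choi matrix of `Ψ : L(X ⊗ E) → L(A)`, as an operator on `(A ⊗ X) ⊗ E`. -/
noncomputable def ChoiPsi {dx de da : ℕ}
    (Ψ : Matrix (Fin dx × Fin de) (Fin dx × Fin de) ℂ →ₗ[ℂ] Matrix (Fin da) (Fin da) ℂ) :
    Matrix ((Fin da × Fin dx) × Fin de) ((Fin da × Fin dx) × Fin de) ℂ :=
  fun p q => Ψ (Matrix.single (p.1.2, p.2) (q.1.2, q.2) 1) p.1.1 q.1.1

/-- The Choi matrix of `Λ : L(X) → L(A)`, `Λ(X) = Ψ(X ⊗ Z)`. -/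
noncomputable def ChoiLam {dx de da : ℕ}
    (Ψ : Matrix (Fin dx × Fin de) (Fin dx × Fin de) ℂ →ₗ[ℂ] Matrix (Fin da) (Fin da) ℂ)
    (Z : Matrix (Fin de) (Fin de) ℂ) :
    Matrix (Fin da × Fin dx) (Fin da × Fin dx) ℂ :=
  fun p q => Ψ (Matrix.single p.2 q.2 1 ⊗ₖ Z) p.1 q.1

/-- Applying `φ ⊗ id_{L(E)}` to `J(Ψ)`: the operator on `E` whose `(e, e')` entry is
`φ` applied to the corresponding `A ⊗ X` block of `J(Ψ)`. -/
noncomputable def phiTensorId {dx de da : ℕ}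
    (φ : Matrix (Fin da × Fin dx) (Fin da × Fin dx) ℂ →ₗ[ℂ] ℂ)
    (Ψ : Matrix (Fin dx × Fin de) (Fin dx × Fin de) ℂ →ₗ[ℂ] Matrix (Fin da) (Fin da) ℂ) :
    Matrix (Fin de) (Fin de) ℂ :=
  Matrix.of fun e e' => φ (Matrix.of fun p q => ChoiPsi Ψ (p, e) (q, e'))

lemma choiLam_eq_sum {dx de da : ℕ}
    (Ψ : Matrix (Fin dx × Fin de) (Fin dx × Fin de) ℂ →ₗ[ℂ] Matrix (Fin da) (Fin da) ℂ)
    (Z : Matrix (Fin de) (Fin de) ℂ) :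
    ChoiLam Ψ Z = ∑ e : Fin de, ∑ e' : Fin de,
      Z e e' • Matrix.of (fun p q => ChoiPsi Ψ (p, e) (q, e')) := by
  ext p q
  have hZ : ∀ x x' : Fin dx, Matrix.single x x' (1:ℂ) ⊗ₖ Z
      = ∑ e : Fin de, ∑ e' : Fin de,
        Z e e' • Matrix.single (x, e) (x', e') (1:ℂ) := by
    intro x x'
    ext ⟨i, j⟩ ⟨k, l⟩
    simp only [Matrix.kroneckerMap_apply, Matrix.single, Matrix.sum_apply,
      Matrix.smul_apply, Matrix.of_apply, smul_eq_mul, Prod.mk.injEq]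
    rw [Finset.sum_eq_single j, Finset.sum_eq_single l]
    · by_cases h1 : x = i <;> by_cases h2 : x' = k <;> simp [h1, h2]
    · intro b _ hb; simp [hb]
    · simp
    · intro b _ hb
      rw [Finset.sum_eq_zero]; intro c _; simp [hb]
    · simp
  simp only [ChoiLam, hZ, map_sum, _root_.map_smul, Matrix.sum_apply, Matrix.smul_apply,
    Matrix.of_apply, ChoiPsi, smul_eq_mul]

/-- For `Λ(X) = Ψ(X ⊗ Z)` and any linear functional `φ` on `L(A ⊗ X)`:
`φ(J(Λ)) = ⟨conj(Z), (φ ⊗ id_{L(E)})(J(Ψ))⟩` with `⟨A, B⟩ = tr(Aᴴ B)`. -/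
theorem phi_choi_eq_inner {dx de da : ℕ}
    (Ψ : Matrix (Fin dx × Fin de) (Fin dx × Fin de) ℂ →ₗ[ℂ] Matrix (Fin da) (Fin da) ℂ)
    (Z : Matrix (Fin de) (Fin de) ℂ)
    (φ : Matrix (Fin da × Fin dx) (Fin da × Fin dx) ℂ →ₗ[ℂ] ℂ) :
    φ (ChoiLam Ψ Z) = (((Z.map (starRingEnd ℂ))ᴴ) * phiTensorId φ Ψ).trace := by
  rw [choiLam_eq_sum, map_sum]
  simp only [map_sum, _root_.map_smul, smul_eq_mul]
  rw [Matrix.trace]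
  simp only [Matrix.diag_apply, Matrix.mul_apply, Matrix.conjTranspose_apply,
    Matrix.map_apply, RingHom.coe_coe, Complex.star_def, Complex.conj_conj, phiTensorId, Matrix.of_apply]
  rw [Finset.sum_comm]
end
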